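/- Let P(A, θ) = Σ_{j=0}^{i} θ_j A^j. Under the assumptions max_{1≤k≤M} ‖A^k‖₂ ≤ L (with L ≥ 1, i ≤ M), ‖A − Â‖₂ ≤ δ_A, ‖θ‖₁ ≤ ρ_θ, and ‖θ − θ̂‖₁ ≤ δ_θ, we have the stability bound ‖P(Â, θ̂) − P(A, θ)‖₂ ≤ ρ_θ δ_A L̂_M(δ_A) + δ_θ (L + δ_A L̂_M(δ_A)), where L̂_M(δ) = max_{1≤k≤M} ((L+δ)^k − L^k)/δ. -/
import Mathlib


noncomputable def Lhat (L δ : ℝ) (M : ℕ) : ℝ :=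
  ⨆ k ∈ Finset.Icc 1 M, ((L + δ) ^ k - L ^ k) / δ

lemma Lhat_bdd (f : ℕ → ℝ) (M : ℕ) :
    BddAbove (Set.range fun k => ⨆ _ : k ∈ Finset.Icc 1 M, f k) := by
  have hfin : (insert (0 : ℝ) (((Finset.Icc 1 M).image f : Finset ℝ) : Set ℝ)).Finite :=
    (((Finset.Icc 1 M).image f).finite_toSet).insert 0
  apply hfin.bddAbove.mono
  rintro x ⟨k, rfl⟩
  by_cases h : k ∈ Finset.Icc 1 M
  · refine Set.mem_insert_iff.mpr (Or.inr ?_)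
    simp only [ciSup_pos h, Finset.coe_image, Set.mem_image, Finset.mem_coe]
    exact ⟨k, h, rfl⟩
  · refine Set.mem_insert_iff.mpr (Or.inl ?_)
    haveI : IsEmpty (k ∈ Finset.Icc 1 M) := ⟨h⟩
    exact Real.iSup_of_isEmpty _

lemma Lhat_zero_mem (f : ℕ → ℝ) (M : ℕ) (k : ℕ) (hk : k ∉ Finset.Icc 1 M) :
    (⨆ _ : k ∈ Finset.Icc 1 M, f k) = 0 := by
  haveI : IsEmpty (k ∈ Finset.Icc 1 M) := ⟨hk⟩
  exact Real.iSup_of_isEmpty _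

lemma Lhat_nonneg (L δ : ℝ) (M : ℕ) : 0 ≤ Lhat L δ M := by
  have h0 : (0 : ℕ) ∉ Finset.Icc 1 M := by simp
  have h := le_ciSup (Lhat_bdd (fun k => ((L + δ) ^ k - L ^ k) / δ) M) 0
  exact le_trans (le_of_eq (Lhat_zero_mem (fun k => ((L + δ) ^ k - L ^ k) / δ) M 0 h0).symm) h

lemma Lhat_ge (L δ : ℝ) (M k : ℕ) (h1 : 1 ≤ k) (h2 : k ≤ M) :
    ((L + δ) ^ k - L ^ k) / δ ≤ Lhat L δ M := by
  have hk : k ∈ Finset.Icc 1 M := Finset.mem_Icc.mpr ⟨h1, h2⟩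
  have h := le_ciSup (Lhat_bdd (fun k => ((L + δ) ^ k - L ^ k) / δ) M) k
  have e : (⨆ _ : k ∈ Finset.Icc 1 M, ((L + δ) ^ k - L ^ k) / δ) =
      ((L + δ) ^ k - L ^ k) / δ := ciSup_pos hk
  exact le_trans e.symm.le h

lemma pow_diff_bound {N M : ℕ}
    (A B : EuclideanSpace ℝ (Fin N) →L[ℝ] EuclideanSpace ℝ (Fin N))
    (L δ : ℝ) (hL : 1 ≤ L) (hδ : 0 ≤ δ)
    (hA : ∀ k : ℕ, k ≤ M → ‖A ^ k‖ ≤ L)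
    (hE : ‖B - A‖ ≤ δ) :
    ∀ k : ℕ, k ≤ M → ‖B ^ k - A ^ k‖ ≤ (L + δ) ^ k - L ^ k := by
  intro k
  induction k with
  | zero =>
    intro _
    simp only [pow_zero, sub_self, norm_zero, le_refl]
  | succ k ih =>
    intro hkM
    have hkM' : k ≤ M := Nat.le_of_succ_le hkM
    have ihk := ih hkM'
    rcases Nat.eq_zero_or_pos k with rfl | hk1
    · simp only [zero_add, pow_one]
      linarith
    · have hid : B ^ (k + 1) - A ^ (k + 1) = B ^ k * (B - A) + (B ^ k - A ^ k) * A := by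
        rw [pow_succ, pow_succ, mul_sub, sub_mul]; abel
      have hAk : ‖A ^ k‖ ≤ L := hA k hkM'
      have hA1 : ‖A‖ ≤ L := by
        have h := hA 1 (le_trans (by omega) hkM)
        rwa [pow_one] at h
      have hLp : (0 : ℝ) ≤ L := by linarith
      have hmono : L ^ k ≤ (L + δ) ^ k := pow_le_pow_left₀ hLp (by linarith) k
      have hBk : ‖B ^ k‖ ≤ L + ((L + δ) ^ k - L ^ k) := by
        have h := norm_add_le (A ^ k) (B ^ k - A ^ k)
        have he : A ^ k + (B ^ k - A ^ k) = B ^ k := by abel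
        rw [he] at h
        exact le_trans h (add_le_add hAk ihk)
      have hLk : L ≤ L ^ k := le_self_pow₀ hL (by omega)
      calc ‖B ^ (k + 1) - A ^ (k + 1)‖
          ≤ ‖B ^ k * (B - A)‖ + ‖(B ^ k - A ^ k) * A‖ := by rw [hid]; exact norm_add_le _ _
        _ ≤ ‖B ^ k‖ * ‖B - A‖ + ‖B ^ k - A ^ k‖ * ‖A‖ :=
            add_le_add (norm_mul_le _ _) (norm_mul_le _ _)
        _ ≤ (L + ((L + δ) ^ k - L ^ k)) * δ + ((L + δ) ^ k - L ^ k) * L := by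
            have h1 : ‖B ^ k‖ * ‖B - A‖ ≤ (L + ((L + δ) ^ k - L ^ k)) * δ :=
              mul_le_mul hBk hE (norm_nonneg _) (by linarith)
            have h2 : ‖B ^ k - A ^ k‖ * ‖A‖ ≤ ((L + δ) ^ k - L ^ k) * L :=
              mul_le_mul ihk hA1 (norm_nonneg _) (by linarith)
            linarith
        _ ≤ (L + δ) ^ (k + 1) - L ^ (k + 1) := by
            rw [pow_succ, pow_succ]
            nlinarith [mul_nonneg hδ (sub_nonneg.mpr hLk)]

theorem stmt3 {N i M : ℕ}
    (A Ahat : EuclideanSpace ℝ (Fin N) →L[ℝ] EuclideanSpace ℝ (Fin N))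
    (θ θhat : Fin (i + 1) → ℝ) (L δA ρθ δθ : ℝ)
    (hL : 1 ≤ L) (hiM : i ≤ M) (hδ : 0 < δA)
    (hA : ∀ k : ℕ, 1 ≤ k → k ≤ M → ‖A ^ k‖ ≤ L)
    (hE : ‖A - Ahat‖ ≤ δA)
    (hθ : ∑ j, |θ j| ≤ ρθ)
    (hθd : ∑ j, |θ j - θhat j| ≤ δθ) :
    ‖(∑ j : Fin (i + 1), θhat j • Ahat ^ (j : ℕ)) -
        (∑ j : Fin (i + 1), θ j • A ^ (j : ℕ))‖ ≤
      ρθ * δA * Lhat L δA M + δθ * (L + δA * Lhat L δA M) := by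
  have hA' : ∀ k : ℕ, k ≤ M → ‖A ^ k‖ ≤ L := by
    intro k hk
    rcases Nat.eq_zero_or_pos k with rfl | hk1
    · rw [pow_zero, ContinuousLinearMap.one_def]
      exact le_trans ContinuousLinearMap.norm_id_le hL
    · exact hA k hk1 hk
  have hE' : ‖Ahat - A‖ ≤ δA := by rwa [norm_sub_rev]
  have key := pow_diff_bound A Ahat L δA hL hδ.le hA' hE'
  set C1 := δA * Lhat L δA M with hC1def
  have hC1 : 0 ≤ C1 := mul_nonneg hδ.le (Lhat_nonneg L δA M)
  have hC2 : 0 ≤ L + C1 := by linarith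
  have hdiff : ∀ k : ℕ, k ≤ M → ‖Ahat ^ k - A ^ k‖ ≤ C1 := by
    intro k hk
    rcases Nat.eq_zero_or_pos k with rfl | hk1
    · rw [pow_zero, pow_zero, sub_self, norm_zero]; exact hC1
    · calc ‖Ahat ^ k - A ^ k‖ ≤ (L + δA) ^ k - L ^ k := key k hk
        _ = δA * (((L + δA) ^ k - L ^ k) / δA) := by field_simp
        _ ≤ C1 := mul_le_mul_of_nonneg_left (Lhat_ge L δA M k hk1 hk) hδ.le
  have hpow : ∀ k : ℕ, k ≤ M → ‖Ahat ^ k‖ ≤ L + C1 := by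
    intro k hk
    have h := norm_add_le (A ^ k) (Ahat ^ k - A ^ k)
    have he : A ^ k + (Ahat ^ k - A ^ k) = Ahat ^ k := by abel
    rw [he] at h
    exact le_trans h (add_le_add (hA' k hk) (hdiff k hk))
  have hsplit : (∑ j : Fin (i + 1), θhat j • Ahat ^ (j : ℕ)) -
      (∑ j : Fin (i + 1), θ j • A ^ (j : ℕ)) =
      (∑ j : Fin (i + 1), (θhat j - θ j) • Ahat ^ (j : ℕ)) +
      (∑ j : Fin (i + 1), θ j • (Ahat ^ (j : ℕ) - A ^ (j : ℕ))) := by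
    rw [← Finset.sum_sub_distrib, ← Finset.sum_add_distrib]
    apply Finset.sum_congr rfl
    intro j _
    module
  rw [hsplit]
  have hjM : ∀ j : Fin (i + 1), (j : ℕ) ≤ M := fun j => le_trans (by omega) hiM
  have b1 : ‖∑ j : Fin (i + 1), (θhat j - θ j) • Ahat ^ (j : ℕ)‖ ≤ δθ * (L + C1) := by
    calc ‖∑ j : Fin (i + 1), (θhat j - θ j) • Ahat ^ (j : ℕ)‖
        ≤ ∑ j : Fin (i + 1), ‖(θhat j - θ j) • Ahat ^ (j : ℕ)‖ := norm_sum_le _ _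
      _ ≤ ∑ j : Fin (i + 1), |θ j - θhat j| * (L + C1) := by
          apply Finset.sum_le_sum
          intro j _
          have hn : ‖(θhat j - θ j) • Ahat ^ (j : ℕ)‖ ≤
              ‖θhat j - θ j‖ * ‖Ahat ^ (j : ℕ)‖ := ContinuousLinearMap.opNorm_smul_le _ _
          rw [Real.norm_eq_abs, abs_sub_comm] at hn
          exact le_trans hn (mul_le_mul_of_nonneg_left (hpow _ (hjM j)) (abs_nonneg _))
      _ = (∑ j, |θ j - θhat j|) * (L + C1) := by rw [Finset.sum_mul]
      _ ≤ δθ * (L + C1) := mul_le_mul_of_nonneg_right hθd hC2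
  have b2 : ‖∑ j : Fin (i + 1), θ j • (Ahat ^ (j : ℕ) - A ^ (j : ℕ))‖ ≤ ρθ * C1 := by
    calc ‖∑ j : Fin (i + 1), θ j • (Ahat ^ (j : ℕ) - A ^ (j : ℕ))‖
        ≤ ∑ j : Fin (i + 1), ‖θ j • (Ahat ^ (j : ℕ) - A ^ (j : ℕ))‖ := norm_sum_le _ _
      _ ≤ ∑ j : Fin (i + 1), |θ j| * C1 := by
          apply Finset.sum_le_sum
          intro j _
          have hn : ‖θ j • (Ahat ^ (j : ℕ) - A ^ (j : ℕ))‖ ≤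
              ‖θ j‖ * ‖Ahat ^ (j : ℕ) - A ^ (j : ℕ)‖ := ContinuousLinearMap.opNorm_smul_le _ _
          rw [Real.norm_eq_abs] at hn
          exact le_trans hn (mul_le_mul_of_nonneg_left (hdiff _ (hjM j)) (abs_nonneg _))
      _ = (∑ j, |θ j|) * C1 := by rw [Finset.sum_mul]
      _ ≤ ρθ * C1 := mul_le_mul_of_nonneg_right hθ hC1
  calc ‖_ + _‖ ≤ _ := norm_add_le _ _
    _ ≤ δθ * (L + C1) + ρθ * C1 := add_le_add b1 b2
    _ = ρθ * δA * Lhat L δA M + δθ * (L + δA * Lhat L δA M) := by rw [hC1def]; ring
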